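/- Let K be a field of characteristic zero, r ≥ 1, m ≥ 1, and a_1, …, a_m ∈ M_r(K). Let g(u) = u^m + a_1 u^{m-1} + ⋯ + a_m and let M be the associated m×m block companion matrix with entries in M_r(K). Then for every integer p ≥ 0, the naive block trace Tr(M^p) ∈ M_r(K) equals the coefficient of u^{-1} in the formal Laurent expansion of g'(u)·g(u)^{-1}·u^p in M_r(K)((u^{-1})); equivalently, Tr(M^p) = −res_{u=∞}(g'(u)g(u)^{-1}u^p du), where res_{u=∞}(F du) := −(coefficient of u^{-1} in F). -/

import Mathlib

open Polynomial

/-- The block companion matrix of the monic polynomial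
`g(u) = u^m + a 1 * u^(m-1) + ⋯ + a m` with coefficients in `M_r(K)`:
`M_{i+1,i} = 1` for `1 ≤ i ≤ m-1` (1-based), `M_{i,m} = -a (m+1-i)`, other entries `0`. -/
def blockCompanion {K : Type*} [Field K] (r m : ℕ) (a : ℕ → Matrix (Fin r) (Fin r) K) :
    Matrix (Fin m) (Fin m) (Matrix (Fin r) (Fin r) K) :=
  Matrix.of fun i j =>
    if (j : ℕ) + 1 = m then -a (m - (i : ℕ))
    else if (i : ℕ) = (j : ℕ) + 1 then 1 else 0

/-- The embedding of `R[u]` into the ring `R((u⁻¹))` of formal Laurent series in `u⁻¹`,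
realized as Hahn series in the variable `T = u⁻¹`: the coefficient of `u^i` is placed
in degree `-i`.  The coefficient of `u⁻¹` of such a series `F` is `F.coeff 1`. -/
noncomputable def toLaurentAtInfinity {R : Type*} [Ring R] (p : Polynomial R) :
    LaurentSeries R :=
  p.sum fun i c => HahnSeries.single (-(i : ℤ)) c

namespace Statement1Aux

lemma coeff_sum' {R : Type*} [Ring R] {α : Type*} (s : Finset α) (f : α → LaurentSeries R)
    (k : ℤ) : (∑ x ∈ s, f x).coeff k = ∑ x ∈ s, (f x).coeff k :=
  map_sum (HahnSeries.coeff.addMonoidHom k) f s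

lemma toL_coeff {R : Type*} [Ring R] (p : Polynomial R) (k : ℤ) :
    (toLaurentAtInfinity p).coeff k = if k ≤ 0 then p.coeff (-k).toNat else 0 := by
  classical
  have h : (toLaurentAtInfinity p).coeff k
      = ∑ i ∈ p.support, (HahnSeries.single (-(i : ℤ)) (p.coeff i)).coeff k :=
    coeff_sum' _ _ _
  rw [h]
  simp only [HahnSeries.coeff_single]
  by_cases hk : k ≤ 0
  · rw [if_pos hk]
    by_cases hmem : (-k).toNat ∈ p.support
    · rw [Finset.sum_eq_single_of_mem ((-k).toNat) hmem]
      · rw [if_pos (by omega)]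
      · intro b _ hb
        rw [if_neg (by omega)]
    · rw [Finset.sum_eq_zero, eq_comm]
      · simpa using Polynomial.notMem_support_iff.mp hmem
      · intro b hb
        rw [if_neg]
        intro hkb
        exact hmem (by rwa [show (-k).toNat = b by omega])
  · rw [if_neg hk, Finset.sum_eq_zero]
    intro b hb; rw [if_neg (by omega)]

variable {K : Type*} [Field K]

/-- The bi-infinite sequence of "last column" entries of powers of the block companion
matrix, extended by Kronecker deltas in negative degrees. -/
noncomputable def bseq (r m : ℕ) (a : ℕ → Matrix (Fin r) (Fin r) K) (hm : 1 ≤ m)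
    (i : Fin m) (t : ℤ) : Matrix (Fin r) (Fin r) K :=
  if 0 ≤ t then (blockCompanion r m a ^ t.toNat) i ⟨m - 1, by omega⟩
  else if (i : ℤ) = (m : ℤ) - 1 + t then 1 else 0

lemma bseq_neg (r m : ℕ) (a : ℕ → Matrix (Fin r) (Fin r) K) (hm : 1 ≤ m)
    (i : Fin m) (t : ℤ) (ht : t ≤ 0) :
    bseq r m a hm i t = if (i : ℤ) = (m : ℤ) - 1 + t then 1 else 0 := by
  unfold bseq
  rcases eq_or_lt_of_le ht with h0 | h0
  · subst h0
    rw [if_pos le_rfl]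
    simp only [Int.toNat_zero, pow_zero, Matrix.one_apply]
    have : (i = (⟨m - 1, by omega⟩ : Fin m)) ↔ ((i : ℤ) = (m : ℤ) - 1 + 0) := by
      rw [Fin.ext_iff]; simp only [Fin.val_mk]; omega
    simp [this]
  · rw [if_neg (by omega)]

lemma bseq_van (r m : ℕ) (a : ℕ → Matrix (Fin r) (Fin r) K) (hm : 1 ≤ m)
    (i : Fin m) (t : ℤ) (ht : t < 1 - (m : ℤ)) :
    bseq r m a hm i t = 0 := by
  rw [bseq_neg r m a hm i t (by omega), if_neg (by omega)]

lemma pow_entry (r m : ℕ) (a : ℕ → Matrix (Fin r) (Fin r) K) (hm : 1 ≤ m) :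
    ∀ (n : ℕ) (i j : Fin m),
      (blockCompanion r m a ^ n) i j = bseq r m a hm i ((n : ℤ) + (j : ℕ) + 1 - m) := by
  intro n
  induction n with
  | zero =>
    intro i j
    have hj := j.isLt
    rw [pow_zero, Matrix.one_apply, bseq_neg r m a hm i _ (by omega)]
    have : (i = j) ↔ ((i : ℤ) = (m : ℤ) - 1 + (((0:ℕ) : ℤ) + (j : ℕ) + 1 - m)) := by
      rw [Fin.ext_iff]; omega
    simp [this]
  | succ n ih =>
    intro i j
    have hj := j.isLt
    by_cases hj1 : (j : ℕ) + 1 = m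
    · have hjL : j = (⟨m - 1, by omega⟩ : Fin m) := Fin.ext (by show (j:ℕ) = m - 1; omega)
      unfold bseq
      rw [if_pos (by omega)]
      have hN : ((((n:ℕ)+1 : ℕ) : ℤ) + (j : ℕ) + 1 - m).toNat = n + 1 := by omega
      rw [hN, hjL]
    · rw [pow_succ, Matrix.mul_apply]
      rw [Finset.sum_eq_single_of_mem (⟨(j : ℕ) + 1, by omega⟩ : Fin m) (Finset.mem_univ _)]
      · have hM : blockCompanion r m a (⟨(j : ℕ) + 1, by omega⟩ : Fin m) j = 1 := by
          unfold blockCompanion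
          rw [Matrix.of_apply, if_neg hj1, if_pos rfl]
        rw [hM, mul_one, ih]
        congr 1
        push_cast
        ring
      · intro t _ ht
        have hM : blockCompanion r m a t j = 0 := by
          unfold blockCompanion
          rw [Matrix.of_apply, if_neg hj1, if_neg]
          intro h
          exact ht (Fin.ext h)
        rw [hM, mul_zero]

lemma bseq_rec (r m : ℕ) (a : ℕ → Matrix (Fin r) (Fin r) K) (hm : 1 ≤ m)
    (i : Fin m) (s : ℤ) (hs : 1 ≤ s) :
    bseq r m a hm i s = -∑ l ∈ Finset.Icc 1 m, bseq r m a hm i (s - l) * a l := by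
  obtain ⟨n, rfl⟩ : ∃ n : ℕ, s = (n : ℤ) + 1 := ⟨(s - 1).toNat, by omega⟩
  have h1 : bseq r m a hm i ((n : ℤ) + 1)
      = (blockCompanion r m a ^ (n + 1)) i ⟨m - 1, by omega⟩ := by
    unfold bseq
    rw [if_pos (by omega)]
    norm_num
  rw [h1, pow_succ, Matrix.mul_apply]
  have hM : ∀ t : Fin m, blockCompanion r m a t (⟨m - 1, by omega⟩ : Fin m) = -a (m - t) := by
    intro t
    unfold blockCompanion
    rw [Matrix.of_apply, if_pos (by simp; omega)]
  calc (∑ t : Fin m, (blockCompanion r m a ^ n) i t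
          * blockCompanion r m a t (⟨m - 1, by omega⟩ : Fin m))
      = ∑ t : Fin m, -(bseq r m a hm i ((n : ℤ) + (t : ℕ) + 1 - m) * a (m - t)) := by
        refine Finset.sum_congr rfl fun t _ => ?_
        rw [hM, pow_entry r m a hm, mul_neg]
    _ = -∑ t : Fin m, bseq r m a hm i ((n : ℤ) + (t : ℕ) + 1 - m) * a (m - t) := by
        rw [Finset.sum_neg_distrib]
    _ = -∑ l ∈ Finset.Icc 1 m, bseq r m a hm i ((n : ℤ) + 1 - l) * a l := by
        congr 1
        refine Finset.sum_bij' (i := fun (t : Fin m) _ => m - (t : ℕ))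
          (j := fun l hl => ⟨m - l, by simp only [Finset.mem_Icc] at hl; omega⟩)
          (fun t _ => by simp only [Finset.mem_Icc]; omega)
          (fun l hl => Finset.mem_univ _)
          (fun t _ => Fin.ext (by simp only [Fin.val_mk]; omega))
          (fun l hl => by simp only [Fin.val_mk]; simp only [Finset.mem_Icc] at hl; omega)
          (fun t _ => ?_)
        have htm : ((m - (t : ℕ) : ℕ) : ℤ) = (m : ℤ) - (t : ℕ) := by omega
        rw [htm]
        ring_nf

/-- The generating Hahn series of the sequence `bseq i`. -/
noncomputable def Bser (r m : ℕ) (a : ℕ → Matrix (Fin r) (Fin r) K) (hm : 1 ≤ m) (i : Fin m) :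
    LaurentSeries (Matrix (Fin r) (Fin r) K) :=
  HahnSeries.single ((1 : ℤ) - m) 1 *
    HahnSeries.ofPowerSeries ℤ _ (PowerSeries.mk fun n => bseq r m a hm i ((n : ℤ) + 1 - m))

lemma Bser_coeff (r m : ℕ) (a : ℕ → Matrix (Fin r) (Fin r) K) (hm : 1 ≤ m) (i : Fin m)
    (t : ℤ) : (Bser r m a hm i).coeff t = bseq r m a hm i t := by
  unfold Bser
  have h := HahnSeries.coeff_single_mul_add
    (r := (1 : Matrix (Fin r) (Fin r) K))
    (x := HahnSeries.ofPowerSeries ℤ _ (PowerSeries.mk fun n => bseq r m a hm i ((n : ℤ) + 1 - m)))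
    (a := t - (1 - (m:ℤ))) (b := (1 : ℤ) - m)
  rw [sub_add_cancel] at h
  rw [h, one_mul]
  by_cases h0 : 0 ≤ t - (1 - (m:ℤ))
  · obtain ⟨n, hn⟩ : ∃ n : ℕ, t - (1 - (m:ℤ)) = n := ⟨(t - (1 - (m:ℤ))).toNat, by omega⟩
    rw [hn, HahnSeries.ofPowerSeries_apply_coeff, PowerSeries.coeff_mk]
    have harg : (n : ℤ) + 1 - m = t := by omega
    rw [harg]
  · rw [HahnSeries.ofPowerSeries_apply, HahnSeries.embDomain_notin_range, eq_comm]
    · exact bseq_van r m a hm i t (by omega)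
    · rintro ⟨n, hn⟩
      simp only [Nat.castOrderEmbedding_apply] at hn
      omega

/-- Coefficients of `g` including the leading one. -/
def Acoef (r : ℕ) (a : ℕ → Matrix (Fin r) (Fin r) K) (l : ℕ) : Matrix (Fin r) (Fin r) K :=
  if l = 0 then 1 else a l

lemma g_coeff (r m : ℕ) (hm : 1 ≤ m) (a : ℕ → Matrix (Fin r) (Fin r) K)
    (g : Polynomial (Matrix (Fin r) (Fin r) K))
    (hg : g = X ^ m + ∑ j ∈ Finset.Icc 1 m, C (a j) * X ^ (m - j)) (n : ℕ) :
    g.coeff n = if n = m then 1 else if n < m then a (m - n) else 0 := by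
  subst hg
  rw [Polynomial.coeff_add, Polynomial.coeff_X_pow, Polynomial.finset_sum_coeff]
  simp only [Polynomial.coeff_C_mul, Polynomial.coeff_X_pow, mul_ite, mul_one, mul_zero]
  by_cases h1 : n = m
  · rw [if_pos h1, if_pos h1, Finset.sum_eq_zero, add_zero]
    intro j hj; simp only [Finset.mem_Icc] at hj; rw [if_neg (by omega)]
  · rw [if_neg h1, if_neg h1]
    by_cases h2 : n < m
    · rw [if_pos h2,
        Finset.sum_eq_single_of_mem (m - n) (Finset.mem_Icc.mpr (by omega)),
        if_pos (by omega), zero_add]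
      intro j hj hne; simp only [Finset.mem_Icc] at hj; rw [if_neg (by omega)]
    · rw [if_neg h2, Finset.sum_eq_zero, add_zero]
      intro j hj; simp only [Finset.mem_Icc] at hj; rw [if_neg (by omega)]

lemma G_eq (r m : ℕ) (hm : 1 ≤ m) (a : ℕ → Matrix (Fin r) (Fin r) K)
    (g : Polynomial (Matrix (Fin r) (Fin r) K))
    (hg : g = X ^ m + ∑ j ∈ Finset.Icc 1 m, C (a j) * X ^ (m - j)) :
    toLaurentAtInfinity g
      = ∑ l ∈ Finset.range (m + 1), HahnSeries.single ((l : ℤ) - m) (Acoef r a l) := by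
  apply HahnSeries.coeff_injective; funext k
  rw [toL_coeff, coeff_sum']
  simp only [HahnSeries.coeff_single]
  by_cases hk : k ≤ 0
  · rw [if_pos hk, g_coeff r m hm a g hg]
    by_cases hk2 : -(m:ℤ) ≤ k
    · rw [Finset.sum_eq_single_of_mem ((k + m).toNat)
        (show (k + m).toNat ∈ Finset.range (m + 1) from Finset.mem_range.mpr (by omega))]
      · rw [if_pos (show k = (((k + m).toNat : ℕ) : ℤ) - m by omega)]
        unfold Acoef
        by_cases h3 : k = -(m:ℤ)
        · rw [if_pos (show (-k).toNat = m by omega),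
            if_pos (show (k + m).toNat = 0 by omega)]
        · rw [if_neg (show ¬((-k).toNat = m) by omega),
            if_pos (show (-k).toNat < m by omega),
            if_neg (show ¬((k + m).toNat = 0) by omega)]
          have harg : m - (-k).toNat = (k + m).toNat := by omega
          rw [harg]
      · intro b _ hb
        rw [if_neg (show ¬(k = (b : ℤ) - m) by omega)]
    · rw [if_neg (by omega), if_neg (by omega), eq_comm, Finset.sum_eq_zero]
      intro b hb; simp only [Finset.mem_range] at hb; rw [if_neg (by omega)]
  · rw [if_neg hk, eq_comm, Finset.sum_eq_zero]
    intro b hb; simp only [Finset.mem_range] at hb; rw [if_neg (by omega)]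

lemma inner_sum (r m : ℕ) (a : ℕ → Matrix (Fin r) (Fin r) K) (hm : 1 ≤ m) (i : Fin m)
    (k : ℤ) :
    ∑ l ∈ Finset.range (m + 1), bseq r m a hm i (k + i - l) * Acoef r a l =
      if k + i ≤ 0 ∧ 1 - (m:ℤ) ≤ k then Acoef r a ((m:ℤ) - 1 + k).toNat else 0 := by
  by_cases hs : 1 ≤ k + i
  · rw [if_neg (by omega)]
    have hsplit : Finset.range (m + 1) = insert 0 (Finset.Icc 1 m) := by
      ext x; simp only [Finset.mem_range, Finset.mem_insert, Finset.mem_Icc]; omega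
    rw [hsplit, Finset.sum_insert (by simp)]
    have hA0 : Acoef r a 0 = 1 := by unfold Acoef; rw [if_pos rfl]
    rw [hA0, mul_one]
    have hstep : ∑ l ∈ Finset.Icc 1 m, bseq r m a hm i (k + i - l) * Acoef r a l
        = ∑ l ∈ Finset.Icc 1 m, bseq r m a hm i (k + i - l) * a l := by
      refine Finset.sum_congr rfl fun l hl => ?_
      simp only [Finset.mem_Icc] at hl
      unfold Acoef
      rw [if_neg (by omega)]
    rw [hstep]
    have hrec := bseq_rec r m a hm i (k + i) hs
    simp only [Nat.cast_zero, sub_zero]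
    rw [hrec, neg_add_cancel]
  · have hterm : ∀ l ∈ Finset.range (m + 1), bseq r m a hm i (k + i - l) * Acoef r a l
        = if ((l:ℤ)) = (m:ℤ) - 1 + k then Acoef r a l else 0 := by
      intro l hl
      rw [bseq_neg r m a hm i _ (by omega)]
      split_ifs with h1 h2 h2
      · rw [one_mul]
      · exfalso; omega
      · exfalso; omega
      · rw [zero_mul]
    rw [Finset.sum_congr rfl hterm]
    by_cases h2 : 1 - (m:ℤ) ≤ k
    · rw [if_pos ⟨by omega, h2⟩,
        Finset.sum_eq_single_of_mem (((m:ℤ) - 1 + k).toNat) (Finset.mem_range.mpr (by omega)),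
        if_pos (by omega)]
      intro b _ hb; rw [if_neg (by omega)]
    · rw [if_neg (by omega), Finset.sum_eq_zero]
      intro b hb; simp only [Finset.mem_range] at hb; rw [if_neg (by omega)]

lemma key (r m : ℕ) (hm : 1 ≤ m) (a : ℕ → Matrix (Fin r) (Fin r) K)
    (g : Polynomial (Matrix (Fin r) (Fin r) K))
    (hg : g = X ^ m + ∑ j ∈ Finset.Icc 1 m, C (a j) * X ^ (m - j)) :
    (∑ i : Fin m, HahnSeries.single ((m:ℤ) - i) 1 * Bser r m a hm i) * toLaurentAtInfinity g
      = toLaurentAtInfinity (derivative g) := by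
  rw [G_eq r m hm a g hg]
  apply HahnSeries.coeff_injective; funext k
  have hL : ((∑ i : Fin m, HahnSeries.single ((m:ℤ) - i) 1 * Bser r m a hm i) *
        ∑ l ∈ Finset.range (m + 1), HahnSeries.single ((l : ℤ) - m) (Acoef r a l)).coeff k
      = ∑ i : Fin m, ∑ l ∈ Finset.range (m + 1), bseq r m a hm i (k + i - l) * Acoef r a l := by
    rw [Finset.sum_mul_sum, coeff_sum']
    refine Finset.sum_congr rfl fun i _ => ?_
    rw [coeff_sum']
    refine Finset.sum_congr rfl fun l _ => ?_
    have h1 := HahnSeries.coeff_mul_single_add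
      (x := HahnSeries.single ((m:ℤ) - i) 1 * Bser r m a hm i) (r := Acoef r a l)
      (a := k - ((l:ℤ) - m)) (b := (l:ℤ) - m)
    rw [sub_add_cancel] at h1
    rw [h1]
    have h2 := HahnSeries.coeff_single_mul_add
      (r := (1 : Matrix (Fin r) (Fin r) K)) (x := Bser r m a hm i)
      (a := k - ((l:ℤ) - m) - ((m:ℤ) - i)) (b := (m:ℤ) - (i:ℕ))
    rw [sub_add_cancel] at h2
    rw [h2, one_mul, Bser_coeff]
    rw [show k - ((l:ℤ) - m) - ((m:ℤ) - i) = k + i - l by ring]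
  rw [hL, Finset.sum_congr rfl fun i _ => inner_sum r m a hm i k, toL_coeff]
  -- reduce the sum over `Fin m` of the indicator
  have hcount : ∀ (c : Matrix (Fin r) (Fin r) K),
      (∑ i : Fin m, if k + i ≤ 0 ∧ 1 - (m:ℤ) ≤ k then c else 0)
        = if 1 - (m:ℤ) ≤ k then (min (1 - k).toNat m) • c else 0 := by
    intro c
    by_cases h2 : 1 - (m:ℤ) ≤ k
    · rw [if_pos h2]
      have : ∀ i : Fin m, (if k + i ≤ 0 ∧ 1 - (m:ℤ) ≤ k then c else 0)
          = if (i:ℕ) < (1 - k).toNat then c else 0 := by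
        intro i; split_ifs with h3 h4 h4
        · rfl
        · exact absurd (by omega : (i:ℕ) < (1-k).toNat) h4
        · exact absurd (⟨by omega, h2⟩ : k + i ≤ 0 ∧ 1 - (m:ℤ) ≤ k) h3
        · rfl
      rw [Finset.sum_congr rfl fun i _ => this i, Fin.sum_univ_eq_sum_range
        (fun n => if n < (1 - k).toNat then c else 0), ← Finset.sum_filter]
      have hf : (Finset.range m).filter (fun i => i < (1 - k).toNat)
          = Finset.range (min ((1 - k).toNat) m) := by
        ext x
        simp only [Finset.mem_filter, Finset.mem_range, lt_min_iff]
        omega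
      rw [hf, Finset.sum_const, Finset.card_range]
    · rw [if_neg h2, Finset.sum_eq_zero]
      intro i _; rw [if_neg (by tauto)]
  rw [hcount]
  by_cases h2 : 1 - (m:ℤ) ≤ k
  · rw [if_pos h2]
    by_cases h3 : k ≤ 0
    · rw [if_pos h3, Polynomial.coeff_derivative, g_coeff r m hm a g hg]
      have hmin : min (1 - k).toNat m = (1 - k).toNat := by omega
      rw [hmin]
      by_cases h4 : k = 1 - (m:ℤ)
      · rw [if_pos (by omega)]
        have hA : Acoef r a ((m:ℤ) - 1 + k).toNat = 1 := by
          unfold Acoef; rw [if_pos (by omega)]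
        rw [hA, one_mul, nsmul_eq_mul, mul_one]
        have hn : (1 - k).toNat = (-k).toNat + 1 := by omega
        rw [hn]
        push_cast
        ring
      · rw [if_neg (by omega), if_pos (by omega)]
        have hA : Acoef r a ((m:ℤ) - 1 + k).toNat = a (((m:ℤ) - 1 + k).toNat) := by
          unfold Acoef; rw [if_neg (by omega)]
        rw [hA]
        have hidx : m - ((-k).toNat + 1) = ((m:ℤ) - 1 + k).toNat := by omega
        rw [hidx, nsmul_eq_mul]
        have hc := (Nat.cast_commute (α := Matrix (Fin r) (Fin r) K) ((-k).toNat + 1)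
          (a (((m:ℤ) - 1 + k).toNat))).eq
        push_cast at hc
        have hn : ((1 - k).toNat : Matrix (Fin r) (Fin r) K)
            = (((-k).toNat : ℕ) : Matrix (Fin r) (Fin r) K) + 1 := by
          have h5 : (1 - k).toNat = (-k).toNat + 1 := by omega
          rw [h5]
          push_cast
          ring
        rw [hn, hc]
    · rw [if_neg h3]
      have h5 : (1 - k).toNat = 0 := by omega
      rw [h5]
      simp
  · rw [if_neg h2]
    have h3 : k ≤ 0 := by omega
    rw [if_pos h3, Polynomial.coeff_derivative, g_coeff r m hm a g hg,
      if_neg (by omega), if_neg (by omega), zero_mul]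

end Statement1Aux

/-- **Block trace of powers of a companion matrix via residues.**
For `g(u) = u^m + a 1 u^(m-1) + ⋯ + a m` with block companion matrix `M`, and any
(two-sided) inverse `F` of `g` in `M_r(K)((u⁻¹))`, for every `p ≥ 0` the naive block
trace `Tr(M^p) = ∑ i, (M^p) i i` equals the coefficient of `u⁻¹` in `g'(u)·g(u)⁻¹·u^p`,
i.e. `Tr(M^p) = −res_{u=∞}(g' g⁻¹ u^p du)`. -/
theorem statement1 {K : Type*} [Field K] [CharZero K] (r m : ℕ) (hr : 1 ≤ r) (hm : 1 ≤ m)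
    (a : ℕ → Matrix (Fin r) (Fin r) K)
    (g : Polynomial (Matrix (Fin r) (Fin r) K))
    (hg : g = X ^ m + ∑ j ∈ Finset.Icc 1 m, C (a j) * X ^ (m - j))
    (F : LaurentSeries (Matrix (Fin r) (Fin r) K))
    (hF1 : toLaurentAtInfinity g * F = 1) (hF2 : F * toLaurentAtInfinity g = 1)
    (p : ℕ) :
    ∑ i : Fin m, (blockCompanion r m a ^ p) i i =
      (toLaurentAtInfinity (derivative g) * F * toLaurentAtInfinity (X ^ p)).coeff 1 := by
  classical
  have hXp : toLaurentAtInfinity (X ^ p : Polynomial (Matrix (Fin r) (Fin r) K))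
      = HahnSeries.single (-(p:ℤ)) 1 := by
    apply HahnSeries.coeff_injective; funext k
    rw [Statement1Aux.toL_coeff, HahnSeries.coeff_single, Polynomial.coeff_X_pow]
    by_cases h1 : k = -(p:ℤ)
    · rw [if_pos h1, if_pos (by omega), if_pos (by omega)]
    · rw [if_neg h1]
      by_cases h2 : k ≤ 0
      · rw [if_pos h2, if_neg (by omega)]
      · rw [if_neg h2]
  have hS : toLaurentAtInfinity (derivative g) * F
      = ∑ i : Fin m, HahnSeries.single ((m:ℤ) - i) 1 * Statement1Aux.Bser r m a hm i := by
    rw [← Statement1Aux.key r m hm a g hg, mul_assoc, hF1, mul_one]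
  rw [hXp, hS]
  have h1 : ((∑ i : Fin m, HahnSeries.single ((m:ℤ) - i) 1 * Statement1Aux.Bser r m a hm i) *
        HahnSeries.single (-(p:ℤ)) 1).coeff (1 + (p:ℤ) + -(p:ℤ))
      = (∑ i : Fin m,
          HahnSeries.single ((m:ℤ) - i) 1 * Statement1Aux.Bser r m a hm i).coeff (1 + p) * 1 :=
    HahnSeries.coeff_mul_single_add
  rw [show (1:ℤ) = 1 + (p:ℤ) + -(p:ℤ) by ring, h1, mul_one, Statement1Aux.coeff_sum']
  refine Finset.sum_congr rfl fun i _ => ?_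
  have h2 := HahnSeries.coeff_single_mul_add (r := (1 : Matrix (Fin r) (Fin r) K))
    (x := Statement1Aux.Bser r m a hm i) (a := 1 + (p:ℤ) - ((m:ℤ) - i)) (b := (m:ℤ) - i)
  rw [sub_add_cancel] at h2
  rw [h2, one_mul, Statement1Aux.Bser_coeff, Statement1Aux.pow_entry r m a hm p i i,
    show (1:ℤ) + (p:ℤ) - ((m:ℤ) - i) = (p:ℤ) + (i:ℕ) + 1 - m by ring]
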